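/- In a weighted recursive tree on n nodes, the indicator random variables A_{i,n} = 1(node i is an ancestor of node n), for i = 2, ..., n-1, are mutually independent Bernoulli random variables with success probabilities w_i / (w_1 + ... + w_i). -/

import Mathlib

open MeasureTheory Finset Filter

/-- Attachment probability in a weighted recursive tree: node `j` attaches to node `i`. -/
noncomputable def wrtStep (w : ℕ → ℝ) (j i : ℕ) : ℝ :=
  if j ≤ 1 then (if i = 0 then 1 else 0)
  else if 1 ≤ i ∧ i < j then w i / (∑ k ∈ Finset.Icc 1 (j - 1), w k) else 0

/-- The law of a weighted recursive tree on `n` nodes, as a measure on parent functions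
`ω : ℕ → ℕ`, where `ω j` is the parent of node `j` (and `ω j = 0` for irrelevant `j`). -/
noncomputable def wrtMeasure (w : ℕ → ℝ) (n : ℕ) : Measure (ℕ → ℕ) :=
  ∑ t : Fin (n + 1) → Fin (n + 1),
    (ENNReal.ofReal (∏ j : Fin (n + 1), wrtStep w j.val (t j).val)) •
      Measure.dirac (fun j => if h : j < n + 1 then (t ⟨j, h⟩).val else 0)

/-- `i` is an ancestor of `m`: some iterate of the parent map sends `m` to `i`. -/
def isAncestor (ω : ℕ → ℕ) (i m : ℕ) : Prop := ∃ l, 0 < l ∧ ω^[l] m = i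

/-- The depth of node `m`: its number of ancestors (nodes on the path from the root to `m`). -/
noncomputable def depth (ω : ℕ → ℕ) (m : ℕ) : ℕ :=
  Set.ncard {i | 1 ≤ i ∧ isAncestor ω i m}

/-- The height of the tree on nodes `1, …, n`: the maximal depth of a node. -/
noncomputable def height (ω : ℕ → ℕ) (n : ℕ) : ℕ :=
  (Finset.Icc 1 n).sup (fun i => depth ω i)

/-- The number of branches: the number of children of the root. -/
def branches (ω : ℕ → ℕ) (n : ℕ) : ℕ :=
  ((Finset.Icc 2 n).filter (fun j => ω j = 1)).card

open scoped Classical in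
/-- The number of leaves: nodes with no children among nodes `1, …, n`. -/
noncomputable def numLeaves (ω : ℕ → ℕ) (n : ℕ) : ℕ :=
  ((Finset.Icc 1 n).filter (fun i => ∀ j ∈ Finset.Icc (i + 1) n, ω j ≠ i)).card

open scoped ENNReal

namespace WRT
open scoped Classical

noncomputable def W (w : ℕ → ℝ) (i : ℕ) : ℝ := ∑ k ∈ Finset.Icc 1 i, w k

lemma Wpos {w : ℕ → ℝ} (hw : ∀ i, 0 < w i) {i : ℕ} (hi : 1 ≤ i) : 0 < W w i :=
  Finset.sum_pos (fun k _ => hw k) ⟨1, by simp [Finset.mem_Icc, hi]⟩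

lemma W_pred {w : ℕ → ℝ} {i : ℕ} (hi : 1 ≤ i) : W w i = W w (i - 1) + w i := by
  obtain ⟨k, rfl⟩ : ∃ k, i = k + 1 := ⟨i - 1, by omega⟩
  simp only [W, Nat.add_sub_cancel]
  rw [Finset.sum_Icc_succ_top (by omega)]

lemma W_one {w : ℕ → ℝ} : W w 1 = w 1 := by simp [W]

lemma w_le_W {w : ℕ → ℝ} (hw : ∀ i, 0 < w i) {i : ℕ} (hi : 1 ≤ i) : w i ≤ W w i :=
  Finset.single_le_sum (fun k _ => (hw k).le) (by simp [Finset.mem_Icc, hi])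

lemma step_eq {w : ℕ → ℝ} {j i : ℕ} (hj : 2 ≤ j) (h1 : 1 ≤ i) (h2 : i < j) :
    wrtStep w j i = w i / W w (j - 1) := by
  rw [wrtStep, if_neg (by omega), if_pos ⟨h1, h2⟩]; rfl

lemma step_nonneg {w : ℕ → ℝ} (hw : ∀ i, 0 < w i) (j i : ℕ) : 0 ≤ wrtStep w j i := by
  rw [wrtStep]
  split
  · split <;> norm_num
  · split
    · rename_i h1 h2
      have : 2 ≤ j := by omega
      exact div_nonneg (hw i).le (by
        have : 0 < W w (j-1) := Wpos hw (by omega)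
        simpa [W] using this.le)
    · exact le_refl 0
def GoodF (n : ℕ) (ω : ℕ → ℕ) : Prop :=
  ω 0 = 0 ∧ ω 1 = 0 ∧ ∀ m, 2 ≤ m → m ≤ n → 1 ≤ ω m ∧ ω m < m

noncomputable def Pt (w : ℕ → ℝ) (n : ℕ) (t : Fin (n + 1) → Fin (n + 1)) : ℝ :=
  ∏ j : Fin (n + 1), wrtStep w j.val (t j).val

def fomega (n : ℕ) (t : Fin (n + 1) → Fin (n + 1)) : ℕ → ℕ :=
  fun j => if h : j < n + 1 then (t ⟨j, h⟩).val else 0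

lemma fomega_eq {n : ℕ} (t : Fin (n + 1) → Fin (n + 1)) {m : ℕ} (h : m < n + 1) :
    fomega n t m = (t ⟨m, h⟩).val := dif_pos h

lemma Pt_nonneg {w : ℕ → ℝ} (hw : ∀ i, 0 < w i) {n : ℕ} (t : Fin (n + 1) → Fin (n + 1)) :
    0 ≤ Pt w n t :=
  Finset.prod_nonneg fun j _ => step_nonneg hw _ _

lemma rowsum {w : ℕ → ℝ} (hw : ∀ i, 0 < w i) {n : ℕ} (hn : 3 ≤ n) (j : Fin (n + 1)) :
    ∑ i : Fin (n + 1), wrtStep w j.val i.val = 1 := by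
  by_cases hj : j.val ≤ 1
  · have h : ∀ i : Fin (n + 1), wrtStep w j.val i.val
        = if i = (⟨0, by omega⟩ : Fin (n + 1)) then 1 else 0 := by
      intro i
      rw [wrtStep, if_pos hj]
      congr 1
      exact propext ⟨fun h => Fin.ext h, fun h => by rw [h]⟩
    simp_rw [h]
    rw [Finset.sum_ite_eq' Finset.univ (⟨0, by omega⟩ : Fin (n + 1)) (fun _ => (1:ℝ))]
    simp
  · push_neg at hj
    have hj2 : 2 ≤ j.val := hj
    have hjn : j.val ≤ n := by omega
    have h : ∀ i : Fin (n+1), wrtStep w j.val i.val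
        = if 1 ≤ i.val ∧ i.val < j.val then w i.val / W w (j.val - 1) else 0 := by
      intro i; rw [wrtStep, if_neg (by omega)]; rfl
    simp_rw [h]
    rw [Fin.sum_univ_eq_sum_range (fun m => if 1 ≤ m ∧ m < j.val then w m / W w (j.val - 1) else 0)]
    rw [← Finset.sum_filter]
    have hf : (Finset.range (n+1)).filter (fun m => 1 ≤ m ∧ m < j.val) = Finset.Icc 1 (j.val - 1) := by
      ext m; simp only [Finset.mem_filter, Finset.mem_range, Finset.mem_Icc]; omega
    rw [hf, ← Finset.sum_div]
    have : (∑ m ∈ Finset.Icc 1 (j.val - 1), w m) = W w (j.val - 1) := rfl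
    rw [this, div_self (ne_of_gt (Wpos hw (by omega)))]

lemma eval (w : ℕ → ℝ) (n : ℕ) (s : Set (ℕ → ℕ)) (hs : MeasurableSet s) :
    wrtMeasure w n s = ∑ t : Fin (n + 1) → Fin (n + 1),
      ENNReal.ofReal ((if fomega n t ∈ s then (1:ℝ) else 0) * Pt w n t) := by
  rw [wrtMeasure, Measure.finset_sum_apply]
  refine Finset.sum_congr rfl fun t _ => ?_
  rw [Measure.smul_apply, Measure.dirac_apply' _ hs, smul_eq_mul]
  have : (fun j => if h : j < n + 1 then (t ⟨j, h⟩).val else 0) = fomega n t := rfl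
  rw [this, Set.indicator_apply]
  by_cases h : fomega n t ∈ s
  · simp [h, Pt]
  · simp [h]

lemma comp {w : ℕ → ℝ} (hw : ∀ i, 0 < w i) {n : ℕ} (hn : 3 ≤ n)
    (C : Finset (Fin (n + 1))) (c : Fin (n + 1) → Fin (n + 1)) :
    ∑ t : Fin (n + 1) → Fin (n + 1), (if ∀ j ∈ C, t j = c j then (1:ℝ) else 0) * Pt w n t
      = ∏ j ∈ C, wrtStep w j.val (c j).val := by
  have key : ∀ t : Fin (n + 1) → Fin (n + 1), (if ∀ j ∈ C, t j = c j then (1:ℝ) else 0) * Pt w n t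
      = ∏ j : Fin (n + 1),
          ((if j ∈ C then (if t j = c j then (1:ℝ) else 0) else 1) * wrtStep w j.val ((t j)).val) := by
    intro t
    rw [Finset.prod_mul_distrib]
    by_cases h : ∀ j ∈ C, t j = c j
    · rw [if_pos h, one_mul,
        show (∏ j : Fin (n+1), (if j ∈ C then (if t j = c j then (1:ℝ) else 0) else 1)) = 1 from
          Finset.prod_eq_one fun j _ => by
            by_cases hj : j ∈ C
            · simp [hj, h j hj]
            · simp [hj],
        one_mul]
      rfl
    · rw [if_neg h]; push_neg at h; obtain ⟨j0, hj0, hne⟩ := h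
      rw [Finset.prod_eq_zero (Finset.mem_univ j0) (by simp [hj0, hne]), zero_mul, zero_mul]
  simp_rw [key]
  have swap := Finset.prod_univ_sum (fun _ : Fin (n + 1) => (Finset.univ : Finset (Fin (n + 1))))
    (fun j i => (if j ∈ C then (if i = c j then (1:ℝ) else 0) else 1) * wrtStep w j.val i.val)
  rw [Fintype.piFinset_univ] at swap
  rw [← swap]
  have row : ∀ j : Fin (n + 1),
      (∑ i : Fin (n + 1), (if j ∈ C then (if i = c j then (1:ℝ) else 0) else 1) * wrtStep w j.val i.val)
        = if j ∈ C then wrtStep w j.val ((c j)).val else 1 := by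
    intro j
    by_cases hj : j ∈ C
    · simp only [hj, if_true, ite_mul, one_mul, zero_mul]
      rw [Finset.sum_ite_eq' Finset.univ (c j) (fun i => wrtStep w j.val i.val)]
      simp
    · simp only [hj, if_false, one_mul]
      exact rowsum hw hn j
  rw [Finset.prod_congr rfl (fun j _ => row j)]
  rw [Finset.prod_ite_mem, Finset.univ_inter]

lemma good_of_ne {w : ℕ → ℝ} {n : ℕ} (hn : 3 ≤ n)
    {t : Fin (n + 1) → Fin (n + 1)} (h : Pt w n t ≠ 0) : GoodF n (fomega n t) := by
  refine ⟨?_, ?_, ?_⟩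
  · rw [fomega_eq t (by omega : 0 < n + 1)]
    by_contra h0
    exact h (Finset.prod_eq_zero (Finset.mem_univ (⟨0, by omega⟩ : Fin (n + 1)))
      (by rw [wrtStep, if_pos (by norm_num), if_neg h0]))
  · rw [fomega_eq t (by omega : 1 < n + 1)]
    by_contra h0
    exact h (Finset.prod_eq_zero (Finset.mem_univ (⟨1, by omega⟩ : Fin (n + 1)))
      (by rw [wrtStep, if_pos (by norm_num), if_neg h0]))
  · intro m hm2 hmn
    have hmlt : m < n + 1 := by omega
    rw [fomega_eq t hmlt]
    by_contra h0
    push_neg at h0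
    refine h (Finset.prod_eq_zero (Finset.mem_univ (⟨m, hmlt⟩ : Fin (n + 1))) ?_)
    show wrtStep w m ((t ⟨m, hmlt⟩)).val = 0
    have hcond : ¬ (1 ≤ ((t ⟨m, hmlt⟩ : Fin (n+1))).val ∧ ((t ⟨m, hmlt⟩)).val < m) := by
      rintro ⟨ha, hb⟩
      exact absurd hb (by have := h0 ha; omega)
    rw [wrtStep, if_neg (by omega), if_neg hcond]
section Orbit
variable {n : ℕ} {ω : ℕ → ℕ}

lemma good_apply (hg : GoodF n ω) {a : ℕ} (ha : a ≤ n) : ω a ≤ a ∧ ω a ≤ n := by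
  obtain ⟨h0, h1, h2⟩ := hg
  match a with
  | 0 => simp [h0]
  | 1 => simp [h1]
  | (k+2) => have := h2 (k+2) (by omega) ha; omega

lemma iter_le (hg : GoodF n ω) {m : ℕ} (hm : m ≤ n) (l : ℕ) : ω^[l] m ≤ n := by
  induction l with
  | zero => simpa
  | succ l ih => rw [Function.iterate_succ_apply']; exact (good_apply hg ih).2

lemma iter_anti (hg : GoodF n ω) {m : ℕ} (hm : m ≤ n) : Antitone (fun l => ω^[l] m) :=
  antitone_nat_of_succ_le fun l => by
    simp only [Function.iterate_succ_apply']
    exact (good_apply hg (iter_le hg hm l)).1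

lemma anc_le (hg : GoodF n ω) {i m : ℕ} (hm : m ≤ n) (h : isAncestor ω i m) : i ≤ ω m := by
  obtain ⟨l, hl, rfl⟩ := h
  have := iter_anti hg hm hl
  simpa using this

lemma anc_trans {i j m : ℕ} (h1 : isAncestor ω j m) (h2 : isAncestor ω i j) :
    isAncestor ω i m := by
  obtain ⟨l1, hl1, rfl⟩ := h1
  obtain ⟨l2, hl2, rfl⟩ := h2
  exact ⟨l2 + l1, by omega, Function.iterate_add_apply ω l2 l1 m⟩

lemma anc_one {m : ℕ} : isAncestor ω (ω m) m := ⟨1, one_pos, rfl⟩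

lemma anc_succ {i m : ℕ} (h : isAncestor ω i m) : isAncestor ω (ω i) m :=
  anc_trans h anc_one

lemma sandwich (hg : GoodF n ω) {x i m : ℕ} (hm : m ≤ n)
    (hx : isAncestor ω x m) (hi : isAncestor ω i m) (hxi : x < i) : x ≤ ω i := by
  obtain ⟨lx, hlx, hx'⟩ := hx
  obtain ⟨li, hli, hi'⟩ := hi
  have hlt : li < lx := by
    by_contra hcon
    push_neg at hcon
    have := iter_anti hg hm hcon
    simp only [hx', hi'] at this
    omega
  have := iter_anti hg hm (show li + 1 ≤ lx by omega)
  simp only [hx'] at this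
  rwa [Function.iterate_succ_apply', hi'] at this

end Orbit

noncomputable def prevS (S : Finset ℕ) (b : ℕ) : ℕ :=
  if h : ((insert 1 S).filter (· < b)).Nonempty then ((insert 1 S).filter (· < b)).max' h else 0

noncomputable def nxtS (n : ℕ) (S : Finset ℕ) (b : ℕ) : ℕ :=
  if h : ((insert n S).filter (b < ·)).Nonempty then ((insert n S).filter (b < ·)).min' h else 0

section PrevNxt
variable {n : ℕ} {S : Finset ℕ} {b x : ℕ}

lemma prev_nonempty (hb : 2 ≤ b) : ((insert 1 S).filter (· < b)).Nonempty :=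
  ⟨1, by simp [Finset.mem_filter]; omega⟩

lemma prev_mem (hb : 2 ≤ b) : prevS S b ∈ insert 1 S ∧ prevS S b < b := by
  rw [prevS, dif_pos (prev_nonempty hb)]
  have := Finset.max'_mem _ (prev_nonempty (S := S) hb)
  simpa [Finset.mem_filter] using this

lemma prev_ge (hb : 2 ≤ b) (hx : x ∈ insert 1 S) (hxb : x < b) : x ≤ prevS S b := by
  rw [prevS, dif_pos (prev_nonempty hb)]
  exact Finset.le_max' _ _ (by simp [Finset.mem_filter, hx, hxb])

lemma prev_pos (hb : 2 ≤ b) : 1 ≤ prevS S b :=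
  prev_ge hb (by simp) (by omega)

lemma nxt_nonempty (hb : b < n) : ((insert n S).filter (b < ·)).Nonempty :=
  ⟨n, by simp [Finset.mem_filter]; omega⟩

lemma nxt_mem (hb : b < n) : nxtS n S b ∈ insert n S ∧ b < nxtS n S b := by
  rw [nxtS, dif_pos (nxt_nonempty hb)]
  have := Finset.min'_mem _ (nxt_nonempty (S := S) hb)
  simpa [Finset.mem_filter] using this

lemma nxt_le (hb : b < n) (hx : x ∈ insert n S) (hxb : b < x) : nxtS n S b ≤ x := by
  rw [nxtS, dif_pos (nxt_nonempty hb)]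
  exact Finset.min'_le _ _ (by simp [Finset.mem_filter, hx, hxb])

lemma mem_S_bounds (hS : S ⊆ Finset.Icc 2 (n-1)) (hx : x ∈ S) : 2 ≤ x ∧ x ≤ n - 1 := by
  have := hS hx; simpa [Finset.mem_Icc] using this

lemma prev_le_pred (hn : 3 ≤ n) (hS : S ⊆ Finset.Icc 2 (n-1)) (b : ℕ) :
    prevS S b ≤ n - 1 := by
  rw [prevS]
  split
  · rename_i h
    have hm := Finset.max'_mem _ h
    simp only [Finset.mem_filter, Finset.mem_insert] at hm
    rcases hm.1 with h1 | h1
    · omega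
    · exact (mem_S_bounds hS h1).2
  · omega

end PrevNxt
lemma char {n : ℕ} {ω : ℕ → ℕ} {S : Finset ℕ} (hn : 3 ≤ n) (hg : GoodF n ω)
    (hS : S ⊆ Finset.Icc 2 (n-1)) :
    (∀ i ∈ Finset.Icc 2 (n-1), (isAncestor ω i n ↔ i ∈ S)) ↔
      (ω n = prevS S n ∧ ∀ i ∈ S, ω i = prevS S i) := by
  constructor
  · intro hpat
    have hanc : ∀ i ∈ S, isAncestor ω i n := fun i hi => (hpat i (hS hi)).mpr hi
    have hmem1 : ∀ a, isAncestor ω a n → 1 ≤ a → a < n → a ∈ insert 1 S := by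
      intro a ha h1 h2
      rcases Nat.lt_or_ge a 2 with h | h
      · have : a = 1 := by omega
        simp [this]
      · simp only [Finset.mem_insert]
        exact Or.inr ((hpat a (by simp only [Finset.mem_Icc]; omega)).mp ha)
    constructor
    · have h1 : 1 ≤ ω n ∧ ω n < n := hg.2.2 n (by omega) le_rfl
      have hwn : ω n ∈ insert 1 S := hmem1 _ anc_one h1.1 h1.2
      refine le_antisymm (prev_ge (by omega) hwn h1.2) ?_
      obtain ⟨hpm, hplt⟩ := prev_mem (S := S) (show 2 ≤ n by omega)
      rcases Finset.mem_insert.mp hpm with h | h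
      · omega
      · exact anc_le hg le_rfl (hanc _ h)
    · intro i hi
      obtain ⟨hi2, hin⟩ := mem_S_bounds hS hi
      have hii : 1 ≤ ω i ∧ ω i < i := hg.2.2 i hi2 (by omega)
      have hwi : ω i ∈ insert 1 S := hmem1 _ (anc_succ (hanc i hi)) hii.1 (by omega)
      refine le_antisymm (prev_ge hi2 hwi hii.2) ?_
      obtain ⟨hpm, hplt⟩ := prev_mem (S := S) hi2
      rcases Finset.mem_insert.mp hpm with h | h
      · omega
      · exact sandwich hg le_rfl (hanc _ h) (hanc i hi) (by omega)
  · rintro ⟨h1, h2⟩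
    have hsub : ∀ l, 1 ≤ l → ω^[l] n ∈ insert 0 (insert 1 S) := by
      intro l hl
      induction l with
      | zero => omega
      | succ l ih =>
        rcases Nat.lt_or_ge l 1 with h | h
        · have hl0 : l = 0 := by omega
          subst hl0
          rw [Function.iterate_succ_apply', Function.iterate_zero_apply, h1]
          exact Finset.mem_insert_of_mem (prev_mem (show 2 ≤ n by omega)).1
        · have ihh := ih h
          rw [Function.iterate_succ_apply']
          simp only [Finset.mem_insert] at ihh
          rcases ihh with h' | h' | h'
          · rw [h', hg.1]; simp
          · rw [h', hg.2.1]; simp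
          · rw [h2 _ h']
            exact Finset.mem_insert_of_mem (prev_mem (mem_S_bounds hS h').1).1
    have hsup : ∀ k, ∀ i ∈ insert 1 S, n - i ≤ k → isAncestor ω i n := by
      intro k
      induction k with
      | zero =>
        intro i hi hik
        exfalso
        rcases Finset.mem_insert.mp hi with h | h
        · omega
        · have := mem_S_bounds hS h; omega
      | succ k ih =>
        intro i hi hik
        have hi1 : 1 ≤ i := by
          rcases Finset.mem_insert.mp hi with h' | h'
          · omega
          · have := mem_S_bounds hS h'; omega
        by_cases hfree : (S.filter (fun x => i < x)).Nonempty
        · set m := (S.filter (fun x => i < x)).min' hfree with hm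
          have hmmem := Finset.min'_mem _ hfree
          rw [← hm] at hmmem
          simp only [Finset.mem_filter] at hmmem
          obtain ⟨hmS, him⟩ := hmmem
          have hm2 : 2 ≤ m := (mem_S_bounds hS hmS).1
          have hprev : prevS S m = i := by
            refine le_antisymm ?_ (prev_ge hm2 hi him)
            obtain ⟨hpm, hplt⟩ := prev_mem (S := S) hm2
            rcases Finset.mem_insert.mp hpm with h | h
            · omega
            · by_contra hcon
              push_neg at hcon
              have hle : m ≤ prevS S m := Finset.min'_le _ _ (Finset.mem_filter.mpr ⟨h, hcon⟩)
              omega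
          have hanc_m : isAncestor ω m n :=
            ih m (Finset.mem_insert_of_mem hmS) (by omega)
          obtain ⟨l, hl, hlm⟩ := hanc_m
          exact ⟨l + 1, by omega, by rw [Function.iterate_succ_apply', hlm, h2 m hmS, hprev]⟩
        · have hin : i < n := by
            rcases Finset.mem_insert.mp hi with h' | h'
            · omega
            · have := mem_S_bounds hS h'; omega
          have hprev : prevS S n = i := by
            refine le_antisymm ?_ (prev_ge (by omega) hi hin)
            obtain ⟨hpm, hplt⟩ := prev_mem (S := S) (show 2 ≤ n by omega)
            rcases Finset.mem_insert.mp hpm with h | h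
            · omega
            · by_contra hcon
              push_neg at hcon
              exact hfree ⟨_, Finset.mem_filter.mpr ⟨h, hcon⟩⟩
          refine ⟨1, one_pos, ?_⟩
          rw [Function.iterate_one, h1, hprev]
    intro i hi
    simp only [Finset.mem_Icc] at hi
    constructor
    · intro ha
      obtain ⟨l, hl, hli⟩ := ha
      have hmem := hsub l hl
      rw [hli] at hmem
      simp only [Finset.mem_insert] at hmem
      rcases hmem with h | h | h
      · omega
      · omega
      · exact h
    · intro hiS
      exact hsup (n - i) i (Finset.mem_insert_of_mem hiS) le_rfl
lemma meas_iter (m : ℕ) : ∀ l, Measurable fun ω : ℕ → ℕ => ω^[l] m := by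
  intro l
  induction l with
  | zero => simpa using measurable_const
  | succ l ih =>
    have heq : (fun ω : ℕ → ℕ => ω^[l+1] m) = fun ω => ω (ω^[l] m) := by
      funext ω; rw [Function.iterate_succ_apply']
    rw [heq]
    apply measurable_to_countable'
    intro k
    have hset : (fun ω : ℕ → ℕ => ω (ω^[l] m)) ⁻¹' {k}
        = ⋃ a, ((fun ω : ℕ → ℕ => ω^[l] m) ⁻¹' {a}) ∩ ((fun ω : ℕ → ℕ => ω a) ⁻¹' {k}) := by
      ext ω
      simp only [Set.mem_preimage, Set.mem_iUnion, Set.mem_inter_iff, Set.mem_singleton_iff]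
      constructor
      · intro h; exact ⟨ω^[l] m, rfl, h⟩
      · rintro ⟨a, ha, h⟩; rw [← ha] at h; exact h
    rw [hset]
    exact MeasurableSet.iUnion fun a =>
      (ih (measurableSet_singleton a)).inter
        ((measurable_pi_apply a) (measurableSet_singleton k))

lemma meas_anc (i m : ℕ) : MeasurableSet {ω : ℕ → ℕ | isAncestor ω i m} := by
  have h : {ω : ℕ → ℕ | isAncestor ω i m}
      = ⋃ l, ⋃ (_ : 0 < l), (fun ω : ℕ → ℕ => ω^[l] m) ⁻¹' {i} := by
    ext ω
    simp [isAncestor, Set.mem_iUnion]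
  rw [h]
  exact MeasurableSet.iUnion fun l => MeasurableSet.iUnion fun _ =>
    meas_iter m l (measurableSet_singleton i)

def ES (n : ℕ) (S : Finset ℕ) : Set (ℕ → ℕ) :=
  {ω | ∀ i ∈ Finset.Icc 2 (n-1), (isAncestor ω i n ↔ i ∈ S)}

lemma meas_ES (n : ℕ) (S : Finset ℕ) : MeasurableSet (ES n S) := by
  have h : ES n S = ⋂ i ∈ Finset.Icc 2 (n-1),
      {ω : ℕ → ℕ | isAncestor ω i n ↔ i ∈ S} := by
    ext ω; simp [ES, Set.mem_iInter]
  rw [h]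
  refine Finset.measurableSet_biInter _ fun i _ => ?_
  by_cases hi : i ∈ S
  · simp only [hi, iff_true]; exact meas_anc i n
  · simp only [hi, iff_false]; exact (meas_anc i n).compl

lemma meas_g {n : ℕ} (i : ℕ) :
    Measurable fun ω : ℕ → ℕ => if isAncestor ω i n then (1:ℕ) else 0 :=
  Measurable.ite (meas_anc i n) measurable_const measurable_const

lemma tele {w : ℕ → ℝ} (hw : ∀ i, 0 < w i) : ∀ M, 1 ≤ M →
    ∏ m ∈ Finset.Icc 2 M, (W w (m-1) / W w m) = W w 1 / W w M := by
  intro M hM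
  induction M with
  | zero => omega
  | succ M ih =>
    rcases Nat.lt_or_ge M 1 with h | h
    · have hM0 : M = 0 := by omega
      subst hM0
      rw [Finset.Icc_eq_empty (by omega : ¬ (2:ℕ) ≤ 0 + 1), Finset.prod_empty,
        div_self (ne_of_gt (Wpos hw le_rfl))]
    · rw [← Finset.insert_Icc_right_eq_Icc_add_one (by omega : 2 ≤ M + 1),
        Finset.prod_insert (by simp [Finset.mem_Icc]), ih h]
      simp only [Nat.add_sub_cancel]
      have hM1 : W w M ≠ 0 := ne_of_gt (Wpos hw h)
      have hM2 : W w (M+1) ≠ 0 := ne_of_gt (Wpos hw (by omega))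
      field_simp

lemma mem_nS {n : ℕ} {S : Finset ℕ} (hn : 3 ≤ n) (hS : S ⊆ Finset.Icc 2 (n-1)) {a : ℕ}
    (ha : a ∈ insert n S) : 2 ≤ a ∧ a ≤ n := by
  rcases Finset.mem_insert.mp ha with h | h
  · omega
  · have := mem_S_bounds hS h; omega

lemma mem_1S {n : ℕ} {S : Finset ℕ} (hn : 3 ≤ n) (hS : S ⊆ Finset.Icc 2 (n-1)) {b : ℕ}
    (hb : b ∈ insert 1 S) : 1 ≤ b ∧ b < n := by
  rcases Finset.mem_insert.mp hb with h | h
  · omega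
  · have := mem_S_bounds hS h; omega

lemma bij {n : ℕ} {S : Finset ℕ} (hn : 3 ≤ n) (hS : S ⊆ Finset.Icc 2 (n-1)) (w : ℕ → ℝ) :
    ∏ m ∈ insert n S, w (prevS S m) = ∏ m ∈ insert 1 S, w m := by
  refine Finset.prod_nbij' (prevS S) (nxtS n S) ?_ ?_ ?_ ?_ ?_
  · intro a ha
    exact (prev_mem (mem_nS hn hS ha).1).1
  · intro b hb
    exact (nxt_mem (mem_1S hn hS hb).2).1
  · intro a ha
    obtain ⟨ha2, han⟩ := mem_nS hn hS ha
    obtain ⟨hpm, hplt⟩ := prev_mem (S := S) ha2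
    have hpn : prevS S a < n := by omega
    refine le_antisymm (nxt_le hpn ha hplt) ?_
    by_contra hcon
    push_neg at hcon
    obtain ⟨hxm, hxgt⟩ := nxt_mem (S := S) hpn
    rcases Finset.mem_insert.mp hxm with h | h
    · omega
    · have := prev_ge ha2 (Finset.mem_insert_of_mem h) (by omega)
      omega
  · intro b hb
    obtain ⟨hb1, hbn⟩ := mem_1S hn hS hb
    obtain ⟨hxm, hxgt⟩ := nxt_mem (S := S) hbn
    have hx2 : 2 ≤ nxtS n S b := (mem_nS hn hS hxm).1
    refine le_antisymm ?_ (prev_ge hx2 hb hxgt)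
    by_contra hcon
    push_neg at hcon
    obtain ⟨hpm, hplt⟩ := prev_mem (S := S) hx2
    rcases Finset.mem_insert.mp hpm with h | h
    · omega
    · have := nxt_le hbn (Finset.mem_insert_of_mem h) (by omega)
      omega
  · intro a ha
    rfl
lemma alg {w : ℕ → ℝ} (hw : ∀ i, 0 < w i) {n : ℕ} {S : Finset ℕ} (hn : 3 ≤ n)
    (hS : S ⊆ Finset.Icc 2 (n-1)) :
    ∏ m ∈ insert n S, wrtStep w m (prevS S m)
      = ∏ m ∈ Finset.Icc 2 (n-1), (if m ∈ S then w m / W w m else 1 - w m / W w m) := by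
  have hnS : n ∉ S := fun h => by have := mem_S_bounds hS h; omega
  have h1S : (1:ℕ) ∉ S := fun h => by have := mem_S_bounds hS h; omega
  have hstep : ∀ m ∈ insert n S, wrtStep w m (prevS S m) = w (prevS S m) / W w (m-1) := by
    intro m hm
    obtain ⟨hm2, hmn⟩ := mem_nS hn hS hm
    exact step_eq hm2 (prev_pos hm2) (prev_mem hm2).2
  rw [Finset.prod_congr rfl hstep, Finset.prod_div_distrib, bij hn hS w]
  rw [Finset.prod_insert h1S, Finset.prod_insert hnS]
  have hq : ∀ m ∈ Finset.Icc 2 (n-1) \ S, (1 - w m / W w m) = W w (m-1) / W w m := by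
    intro m hm
    rw [Finset.mem_sdiff, Finset.mem_Icc] at hm
    have hm2 : 2 ≤ m := hm.1.1
    have hpos : (0:ℝ) < W w (m-1) + w m := by
      rw [← W_pred (by omega : 1 ≤ m)]; exact Wpos hw (by omega)
    have hne : W w (m-1) + w m ≠ 0 := ne_of_gt hpos
    rw [W_pred (by omega : 1 ≤ m)]
    field_simp
    ring
  have hsplit : ∏ m ∈ Finset.Icc 2 (n-1), (if m ∈ S then w m / W w m else 1 - w m / W w m)
      = (∏ m ∈ S, (w m / W w m)) * ∏ m ∈ Finset.Icc 2 (n-1) \ S, (W w (m-1) / W w m) := by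
    rw [Finset.prod_ite]
    congr 1
    · rw [Finset.filter_mem_eq_inter, Finset.inter_eq_right.mpr hS]
    · rw [Finset.filter_not, Finset.filter_mem_eq_inter, Finset.inter_eq_right.mpr hS]
      exact Finset.prod_congr rfl hq
  rw [hsplit]
  have hsdS : (∏ m ∈ S, (W w (m-1) / W w m)) = (∏ m ∈ S, W w (m-1)) / ∏ m ∈ S, W w m :=
    Finset.prod_div_distrib _ _
  have hSdiv : (∏ m ∈ S, (w m / W w m)) = (∏ m ∈ S, w m) / ∏ m ∈ S, W w m :=
    Finset.prod_div_distrib _ _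
  have hsd : (∏ m ∈ Finset.Icc 2 (n-1) \ S, (W w (m-1) / W w m)) * ∏ m ∈ S, (W w (m-1) / W w m)
      = W w 1 / W w (n-1) := by
    rw [Finset.prod_sdiff hS]
    exact tele hw (n-1) (by omega)
  have hWn : W w (n-1) ≠ 0 := ne_of_gt (Wpos hw (by omega))
  have hBp : (∏ m ∈ S, W w (m-1)) ≠ 0 :=
    ne_of_gt (Finset.prod_pos fun m hm => Wpos hw (by have := mem_S_bounds hS hm; omega))
  have hBc : (∏ m ∈ S, W w m) ≠ 0 :=
    ne_of_gt (Finset.prod_pos fun m hm => Wpos hw (by have := mem_S_bounds hS hm; omega))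
  have hprodS_ne : (∏ m ∈ S, (W w (m-1) / W w m)) ≠ 0 := by
    rw [hsdS]; exact div_ne_zero hBp hBc
  have hrest : (∏ m ∈ Finset.Icc 2 (n-1) \ S, (W w (m-1) / W w m))
      = (W w 1 / W w (n-1)) / (∏ m ∈ S, (W w (m-1) / W w m)) :=
    (eq_div_iff hprodS_ne).mpr hsd
  rw [hSdiv, hrest, hsdS, W_one]
  field_simp

lemma main {w : ℕ → ℝ} (hw : ∀ i, 0 < w i) {n : ℕ} (hn : 3 ≤ n) {S : Finset ℕ}
    (hS : S ⊆ Finset.Icc 2 (n-1)) :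
    wrtMeasure w n (ES n S)
      = ∏ m ∈ Finset.Icc 2 (n-1),
          ENNReal.ofReal (if m ∈ S then w m / W w m else 1 - w m / W w m) := by
  classical
  have hprevlt : ∀ b, prevS S b < n + 1 := fun b => by
    have := prev_le_pred hn hS b; omega
  set c : Fin (n+1) → Fin (n+1) := fun j => ⟨prevS S j.val, hprevlt _⟩ with hc
  set C : Finset (Fin (n+1)) := Finset.univ.filter (fun j => j.val = n ∨ j.val ∈ S) with hC
  rw [eval w n (ES n S) (meas_ES n S)]
  have hCiff : ∀ t : Fin (n+1) → Fin (n+1), GoodF n (fomega n t) →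
      ((fomega n t ∈ ES n S) ↔ (∀ j ∈ C, t j = c j)) := by
    intro t hg
    have hchar := char hn hg hS
    constructor
    · intro hE
      obtain ⟨h1, h2⟩ := hchar.mp hE
      intro j hj
      rw [hC, Finset.mem_filter] at hj
      apply Fin.ext
      show (t j).val = prevS S j.val
      rcases hj.2 with hv | hv
      · have h1' : (t ⟨n, by omega⟩ : Fin (n+1)).val = prevS S n := by
          rw [← fomega_eq t (by omega : n < n+1)]; exact h1
        have hjeq : j = (⟨n, by omega⟩ : Fin (n+1)) := Fin.ext (by simpa using hv)
        calc (t j).val = (t ⟨n, by omega⟩).val := by rw [hjeq]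
          _ = prevS S n := h1'
          _ = prevS S j.val := by rw [hv]
      · have h2' : (t ⟨j.val, j.isLt⟩ : Fin (n+1)).val = prevS S j.val := by
          rw [← fomega_eq t j.isLt]; exact h2 j.val hv
        simpa using h2'
    · intro hall
      apply hchar.mpr
      constructor
      · have hmem : (⟨n, by omega⟩ : Fin (n+1)) ∈ C := by
          rw [hC, Finset.mem_filter]; exact ⟨Finset.mem_univ _, Or.inl rfl⟩
        have hval := congrArg Fin.val (hall _ hmem)
        rw [fomega_eq t (by omega : n < n+1)]
        exact hval
      · intro i hi
        have hilt : i < n + 1 := by have := mem_S_bounds hS hi; omega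
        have hmem : (⟨i, hilt⟩ : Fin (n+1)) ∈ C := by
          rw [hC, Finset.mem_filter]
          exact ⟨Finset.mem_univ _, Or.inr hi⟩
        have hval := congrArg Fin.val (hall _ hmem)
        rw [fomega_eq t hilt]
        exact hval
  have hterm : ∀ t : Fin (n+1) → Fin (n+1),
      (if fomega n t ∈ ES n S then (1:ℝ) else 0) * Pt w n t
        = (if ∀ j ∈ C, t j = c j then (1:ℝ) else 0) * Pt w n t := by
    intro t
    by_cases hPt : Pt w n t = 0
    · rw [hPt, mul_zero, mul_zero]
    · have hg := good_of_ne hn hPt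
      rw [if_congr (hCiff t hg) rfl rfl]
  rw [Finset.sum_congr rfl (fun t _ => by rw [hterm t])]
  rw [← ENNReal.ofReal_sum_of_nonneg (fun t _ =>
    mul_nonneg (by split <;> norm_num) (Pt_nonneg hw t))]
  rw [comp hw hn C c]
  have hCprod : (∏ j ∈ C, wrtStep w j.val ((c j)).val)
      = ∏ m ∈ insert n S, wrtStep w m (prevS S m) := by
    have h1 : (∏ j ∈ C, wrtStep w j.val ((c j)).val)
        = ∏ j : Fin (n+1), (if (j.val = n ∨ j.val ∈ S) then wrtStep w j.val (prevS S j.val) else 1) := by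
      rw [hC, Finset.prod_filter]
    rw [h1, Fin.prod_univ_eq_prod_range
      (fun m => if (m = n ∨ m ∈ S) then wrtStep w m (prevS S m) else 1) (n+1)]
    rw [← Finset.prod_filter]
    congr 1
    ext m
    simp only [Finset.mem_filter, Finset.mem_range, Finset.mem_insert]
    constructor
    · rintro ⟨_, h⟩; exact h
    · rintro (h | h)
      · exact ⟨by omega, Or.inl h⟩
      · exact ⟨by have := mem_S_bounds hS h; omega, Or.inr h⟩
  rw [hCprod, alg hw hn hS]
  rw [ENNReal.ofReal_prod_of_nonneg]
  intro m hm
  rw [Finset.mem_Icc] at hm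
  by_cases h : m ∈ S
  · simp only [h, if_true]
    exact div_nonneg (hw m).le (Wpos hw (by omega)).le
  · simp only [h, if_false]
    have hle := w_le_W hw (show 1 ≤ m by omega)
    have hpos := Wpos hw (show 1 ≤ m by omega)
    rw [sub_nonneg]
    exact (div_le_one hpos).mpr hle
lemma part {w : ℕ → ℝ} (hw : ∀ i, 0 < w i) {n : ℕ} (hn : 3 ≤ n)
    (X : Set (ℕ → ℕ)) (hX : MeasurableSet X) :
    wrtMeasure w n X = ∑ S ∈ (Finset.Icc 2 (n-1)).powerset, wrtMeasure w n (X ∩ ES n S) := by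
  classical
  have hcover : X = ⋃ S ∈ (Finset.Icc 2 (n-1)).powerset, (X ∩ ES n S) := by
    ext ω
    simp only [Set.mem_iUnion, Set.mem_inter_iff, Finset.mem_powerset]
    constructor
    · intro hx
      refine ⟨(Finset.Icc 2 (n-1)).filter (fun i => isAncestor ω i n),
        Finset.filter_subset _ _, hx, ?_⟩
      intro i hi
      simp [ES, Finset.mem_filter, hi]
    · rintro ⟨S, _, hx, _⟩; exact hx
  have hdisj : ((Finset.Icc 2 (n-1)).powerset : Set (Finset ℕ)).PairwiseDisjoint
      (fun S => X ∩ ES n S) := by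
    intro S hS' S' hS'' hne
    refine Set.disjoint_left.mpr ?_
    rintro ω ⟨_, hw1⟩ ⟨_, hw2⟩
    apply hne
    have hSsub : S ⊆ Finset.Icc 2 (n-1) := Finset.mem_powerset.mp (Finset.mem_coe.mp hS')
    have hSsub' : S' ⊆ Finset.Icc 2 (n-1) := Finset.mem_powerset.mp (Finset.mem_coe.mp hS'')
    ext i
    by_cases hi : i ∈ Finset.Icc 2 (n-1)
    · rw [← hw1 i hi]
      exact hw2 i hi
    · exact iff_of_false (fun h => hi (hSsub h)) (fun h => hi (hSsub' h))
  conv_lhs => rw [hcover]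
  exact measure_biUnion_finset hdisj (fun S _ => hX.inter (meas_ES n S))

lemma sumPow (T : Finset ℕ) (a b : ℕ → ℝ≥0∞) :
    ∑ S ∈ T.powerset, ∏ m ∈ T, (if m ∈ S then a m else b m) = ∏ m ∈ T, (a m + b m) := by
  classical
  rw [Finset.prod_add]
  refine Finset.sum_congr rfl fun S hS => ?_
  rw [Finset.mem_powerset] at hS
  rw [Finset.prod_ite]
  congr 1
  · congr 1
    rw [Finset.filter_mem_eq_inter, Finset.inter_eq_right.mpr hS]
  · congr 1
    rw [Finset.filter_not, Finset.filter_mem_eq_inter, Finset.inter_eq_right.mpr hS]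

lemma pq_one {w : ℕ → ℝ} (hw : ∀ i, 0 < w i) {n : ℕ} (hn : 3 ≤ n) {m : ℕ}
    (hm : m ∈ Finset.Icc 2 (n-1)) :
    ENNReal.ofReal (w m / W w m) + ENNReal.ofReal (1 - w m / W w m) = 1 := by
  rw [Finset.mem_Icc] at hm
  have h1 : 1 ≤ m := by omega
  have hp : 0 ≤ w m / W w m := div_nonneg (hw m).le (Wpos hw h1).le
  have hq : 0 ≤ 1 - w m / W w m := by
    rw [sub_nonneg]; exact (div_le_one (Wpos hw h1)).mpr (w_le_W hw h1)
  rw [← ENNReal.ofReal_add hp hq]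
  have heq : w m / W w m + (1 - w m / W w m) = 1 := by ring
  rw [heq, ENNReal.ofReal_one]

lemma marg {w : ℕ → ℝ} (hw : ∀ i, 0 < w i) {n : ℕ} (hn : 3 ≤ n) {i : ℕ}
    (h2 : 2 ≤ i) (hin : i ≤ n - 1) :
    wrtMeasure w n {ω | isAncestor ω i n} = ENNReal.ofReal (w i / W w i) ∧
    wrtMeasure w n {ω | ¬ isAncestor ω i n} = ENNReal.ofReal (1 - w i / W w i) := by
  classical
  have hiI : i ∈ Finset.Icc 2 (n-1) := by rw [Finset.mem_Icc]; omega
  constructor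
  · have key1 : ∀ S ∈ (Finset.Icc 2 (n-1)).powerset,
        wrtMeasure w n ({ω | isAncestor ω i n} ∩ ES n S)
          = ∏ m ∈ Finset.Icc 2 (n-1),
              (if m ∈ S then ENNReal.ofReal (w m / W w m)
               else (if m = i then 0 else ENNReal.ofReal (1 - w m / W w m))) := by
      intro S hSp
      rw [Finset.mem_powerset] at hSp
      by_cases hiS : i ∈ S
      · have hsub : ES n S ⊆ {ω | isAncestor ω i n} := fun ω hω => (hω i hiI).mpr hiS
        rw [Set.inter_eq_right.mpr hsub, main hw hn hSp]
        refine Finset.prod_congr rfl fun m hm => ?_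
        by_cases hmS : m ∈ S
        · simp [hmS]
        · have hmi : m ≠ i := fun h => hmS (h ▸ hiS)
          simp [hmS, hmi]
      · have hempty : {ω | isAncestor ω i n} ∩ ES n S = ∅ := by
          ext ω
          simp only [Set.mem_inter_iff, Set.mem_setOf_eq, Set.mem_empty_iff_false, iff_false]
          rintro ⟨ha, hE⟩
          exact hiS ((hE i hiI).mp ha)
        rw [hempty, measure_empty]
        symm
        apply Finset.prod_eq_zero hiI
        simp [hiS]
    rw [part hw hn _ (meas_anc i n), Finset.sum_congr rfl key1,
      sumPow (Finset.Icc 2 (n-1)) (fun m => ENNReal.ofReal (w m / W w m))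
        (fun m => if m = i then 0 else ENNReal.ofReal (1 - w m / W w m))]
    rw [Finset.prod_eq_single_of_mem i hiI (fun m hm hmi => by
      rw [if_neg hmi]; exact pq_one hw hn hm)]
    simp
  · have key2 : ∀ S ∈ (Finset.Icc 2 (n-1)).powerset,
        wrtMeasure w n ({ω | ¬ isAncestor ω i n} ∩ ES n S)
          = ∏ m ∈ Finset.Icc 2 (n-1),
              (if m ∈ S then (if m = i then 0 else ENNReal.ofReal (w m / W w m))
               else ENNReal.ofReal (1 - w m / W w m)) := by
      intro S hSp
      rw [Finset.mem_powerset] at hSp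
      by_cases hiS : i ∈ S
      · have hempty : {ω | ¬ isAncestor ω i n} ∩ ES n S = ∅ := by
          ext ω
          simp only [Set.mem_inter_iff, Set.mem_setOf_eq, Set.mem_empty_iff_false, iff_false]
          rintro ⟨ha, hE⟩
          exact ha ((hE i hiI).mpr hiS)
        rw [hempty, measure_empty]
        symm
        apply Finset.prod_eq_zero hiI
        simp [hiS]
      · have hsub : ES n S ⊆ {ω | ¬ isAncestor ω i n} :=
          fun ω hω ha => hiS ((hω i hiI).mp ha)
        rw [Set.inter_eq_right.mpr hsub, main hw hn hSp]
        refine Finset.prod_congr rfl fun m hm => ?_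
        by_cases hmS : m ∈ S
        · have hmi : m ≠ i := fun h => hiS (h ▸ hmS)
          simp [hmS, hmi]
        · simp [hmS]
    have hmeas : MeasurableSet {ω : ℕ → ℕ | ¬ isAncestor ω i n} := by
      have := (meas_anc i n).compl
      rwa [Set.compl_setOf] at this
    rw [part hw hn _ hmeas, Finset.sum_congr rfl key2,
      sumPow (Finset.Icc 2 (n-1)) (fun m => if m = i then 0 else ENNReal.ofReal (w m / W w m))
        (fun m => ENNReal.ofReal (1 - w m / W w m))]
    rw [Finset.prod_eq_single_of_mem i hiI (fun m hm hmi => by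
      rw [if_neg hmi]; exact pq_one hw hn hm)]
    simp
lemma inter {w : ℕ → ℝ} (hw : ∀ i, 0 < w i) {n : ℕ} (hn : 3 ≤ n)
    (T : Finset {x // x ∈ Finset.Icc 2 (n-1)})
    (B : {x // x ∈ Finset.Icc 2 (n-1)} → Set ℕ) :
    wrtMeasure w n
        (⋂ i ∈ T, (fun ω : ℕ → ℕ => if isAncestor ω i.val n then (1:ℕ) else 0) ⁻¹' B i)
      = ∏ i ∈ T, ((if (1:ℕ) ∈ B i then ENNReal.ofReal (w i.val / W w i.val) else 0)
          + (if (0:ℕ) ∈ B i then ENNReal.ofReal (1 - w i.val / W w i.val) else 0)) := by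
  classical
  set X := ⋂ i ∈ T, (fun ω : ℕ → ℕ => if isAncestor ω i.val n then (1:ℕ) else 0) ⁻¹' B i
    with hX
  have hXm : MeasurableSet X :=
    Finset.measurableSet_biInter _ fun i _ =>
      (meas_g (n := n) i.val) MeasurableSpace.measurableSet_top
  have hval : ∀ S ∈ (Finset.Icc 2 (n-1)).powerset,
      wrtMeasure w n (X ∩ ES n S)
        = ∏ m ∈ Finset.Icc 2 (n-1),
            (if m ∈ S then
              (ENNReal.ofReal (w m / W w m) * (if (∀ i ∈ T, i.val = m → (1:ℕ) ∈ B i) then 1 else 0))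
             else
              (ENNReal.ofReal (1 - w m / W w m) * (if (∀ i ∈ T, i.val = m → (0:ℕ) ∈ B i) then 1 else 0))) := by
    intro S hSp
    rw [Finset.mem_powerset] at hSp
    by_cases hcompat : ∀ i ∈ T, (if i.val ∈ S then (1:ℕ) else 0) ∈ B i
    · have hsub : ES n S ⊆ X := by
        intro ω hω
        rw [hX]
        simp only [Set.mem_iInter]
        intro i hi
        simp only [Set.mem_preimage]
        have hiff : isAncestor ω i.val n ↔ i.val ∈ S := hω i.val i.2
        by_cases hanc : isAncestor ω i.val n
        · rw [if_pos hanc]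
          have hcc := hcompat i hi
          rwa [if_pos (hiff.mp hanc)] at hcc
        · rw [if_neg hanc]
          have hcc := hcompat i hi
          rwa [if_neg (fun h => hanc (hiff.mpr h))] at hcc
      rw [Set.inter_eq_right.mpr hsub, main hw hn hSp]
      refine Finset.prod_congr rfl fun m hm => ?_
      by_cases hmS : m ∈ S
      · rw [if_pos hmS, if_pos hmS, if_pos, mul_one]
        intro i hi hieq
        have hcc := hcompat i hi
        rwa [if_pos (hieq ▸ hmS : i.val ∈ S)] at hcc
      · rw [if_neg hmS, if_neg hmS, if_pos, mul_one]
        intro i hi hieq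
        have hcc := hcompat i hi
        rwa [if_neg (fun h : i.val ∈ S => hmS (hieq ▸ h))] at hcc
    · push_neg at hcompat
      obtain ⟨i0, hi0T, hi0B⟩ := hcompat
      have hempty : X ∩ ES n S = ∅ := by
        ext ω
        simp only [Set.mem_inter_iff, Set.mem_empty_iff_false, iff_false]
        rintro ⟨hx, hE⟩
        rw [hX] at hx
        simp only [Set.mem_iInter] at hx
        have hmem := hx i0 hi0T
        simp only [Set.mem_preimage] at hmem
        have hiff := hE i0.val i0.2
        apply hi0B
        by_cases hanc : isAncestor ω i0.val n
        · rw [if_pos (hiff.mp hanc)]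
          rwa [if_pos hanc] at hmem
        · rw [if_neg (fun h => hanc (hiff.mpr h))]
          rwa [if_neg hanc] at hmem
      rw [hempty, measure_empty]
      symm
      apply Finset.prod_eq_zero i0.2
      by_cases hiS : i0.val ∈ S
      · rw [if_pos hiS, if_neg, mul_zero]
        intro hall
        exact hi0B (by rw [if_pos hiS]; exact hall i0 hi0T rfl)
      · rw [if_neg hiS, if_neg, mul_zero]
        intro hall
        exact hi0B (by rw [if_neg hiS]; exact hall i0 hi0T rfl)
  rw [part hw hn X hXm, Finset.sum_congr rfl hval,
    sumPow (Finset.Icc 2 (n-1))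
      (fun m => ENNReal.ofReal (w m / W w m) * (if (∀ i ∈ T, i.val = m → (1:ℕ) ∈ B i) then 1 else 0))
      (fun m => ENNReal.ofReal (1 - w m / W w m) * (if (∀ i ∈ T, i.val = m → (0:ℕ) ∈ B i) then 1 else 0))]
  set T0 : Finset ℕ := T.image (fun i => i.val) with hT0
  have hT0sub : T0 ⊆ Finset.Icc 2 (n-1) := by
    intro m hm
    rw [hT0, Finset.mem_image] at hm
    obtain ⟨i, _, rfl⟩ := hm
    exact i.2
  rw [← Finset.prod_sdiff hT0sub]
  have hone : ∀ m ∈ Finset.Icc 2 (n-1) \ T0,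
      (ENNReal.ofReal (w m / W w m) * (if (∀ i ∈ T, i.val = m → (1:ℕ) ∈ B i) then 1 else 0)
        + ENNReal.ofReal (1 - w m / W w m) * (if (∀ i ∈ T, i.val = m → (0:ℕ) ∈ B i) then 1 else 0)) = 1 := by
    intro m hm
    rw [Finset.mem_sdiff] at hm
    have hnot : ∀ i ∈ T, i.val ≠ m := by
      intro i hi heq
      exact hm.2 (by rw [hT0]; exact Finset.mem_image.mpr ⟨i, hi, heq⟩)
    rw [if_pos (fun i hi heq => absurd heq (hnot i hi)),
        if_pos (fun i hi heq => absurd heq (hnot i hi)), mul_one, mul_one]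
    exact pq_one hw hn hm.1
  rw [Finset.prod_congr rfl hone, Finset.prod_const_one, one_mul]
  rw [hT0, Finset.prod_image (fun i _ j _ h => Subtype.ext h)]
  refine Finset.prod_congr rfl fun i hi => ?_
  have h1iff : (∀ i' ∈ T, i'.val = i.val → (1:ℕ) ∈ B i') ↔ (1:ℕ) ∈ B i :=
    ⟨fun h => h i hi rfl, fun h i' hi' heq => by rwa [Subtype.ext heq]⟩
  have h0iff : (∀ i' ∈ T, i'.val = i.val → (0:ℕ) ∈ B i') ↔ (0:ℕ) ∈ B i :=
    ⟨fun h => h i hi rfl, fun h i' hi' heq => by rwa [Subtype.ext heq]⟩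
  rw [if_congr h1iff rfl rfl, if_congr h0iff rfl rfl]
  by_cases hb1 : (1:ℕ) ∈ B i <;> by_cases hb0 : (0:ℕ) ∈ B i <;> simp [hb1, hb0]

end WRT

open scoped Classical in
/-- The ancestor indicators `A i = 1(i is an ancestor of n)`, `i = 2, …, n-1`, are mutually
independent Bernoulli random variables with success probabilities `w i / (w 1 + ⋯ + w i)`. -/
theorem ancestor_indicators_iIndep_bernoulli (w : ℕ → ℝ) (hw : ∀ i, 0 < w i)
    (n : ℕ) (hn : 3 ≤ n) :
    (∀ i, 2 ≤ i → i ≤ n - 1 →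
      wrtMeasure w n {ω | (if isAncestor ω i n then (1 : ℕ) else 0) = 1} =
        ENNReal.ofReal (w i / ∑ k ∈ Finset.Icc 1 i, w k) ∧
      wrtMeasure w n {ω | (if isAncestor ω i n then (1 : ℕ) else 0) = 0} =
        ENNReal.ofReal (1 - w i / ∑ k ∈ Finset.Icc 1 i, w k)) ∧
    ProbabilityTheory.iIndepFun
      (fun i : (Finset.Icc 2 (n - 1)) => fun ω : ℕ → ℕ =>
        if isAncestor ω i.val n then (1 : ℕ) else 0)
      (wrtMeasure w n) := by
  constructor
  · intro i h2 hin
    have hm := WRT.marg hw hn h2 hin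
    constructor
    · have hset : {ω : ℕ → ℕ | (if isAncestor ω i n then (1:ℕ) else 0) = 1}
          = {ω | isAncestor ω i n} := by
        ext ω; by_cases h : isAncestor ω i n <;> simp [h]
      rw [hset]
      exact hm.1
    · have hset : {ω : ℕ → ℕ | (if isAncestor ω i n then (1:ℕ) else 0) = 0}
          = {ω | ¬ isAncestor ω i n} := by
        ext ω; by_cases h : isAncestor ω i n <;> simp [h]
      rw [hset]
      exact hm.2
  · rw [ProbabilityTheory.iIndepFun_iff_measure_inter_preimage_eq_mul]
    intro T sets hsets
    rw [WRT.inter hw hn T sets]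
    refine Finset.prod_congr rfl fun i hi => ?_
    have hsingle := WRT.inter hw hn {i} sets
    rw [Finset.prod_singleton] at hsingle
    rw [← hsingle]
    congr 1
    simp
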